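/- Consider n jobs with release times r_1 ≤ ... ≤ r_n processed without preemption in order 1, 2, ..., n (job j completes before job j+1 starts). For a schedule σ assigning each job j a processing time x_j > 0 and hence completion times, define 'j affects j'' transitively from the base relation C_j ≤ C_{j'} and C_j > r_{j'}. Then for every job j, the set of jobs affected by j together with j itself forms a contiguous interval {j, j+1, ..., j+ℓ} for some ℓ ≥ 0. -/
import Mathlib


/-- For `n` jobs with nondecreasing release times `r`, processed
non-preemptively in index order (job `j` starts at `S j ≥ r j`, has processing
time `x j > 0`, completes at `C j = S j + x j`, and job `j+1` starts no earlier
than `C j`), the set of jobs affected by `j` (transitive closure of the base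
relation `C_j ≤ C_{j'} ∧ C_j > r_{j'}`) together with `j` is a contiguous
interval `{j, j+1, ..., m}` of indices. -/
theorem stmt_9 (n : ℕ) (r x S C : Fin n → ℝ)
    (hr : Monotone r) (hx : ∀ j, 0 < x j) (hrS : ∀ j, r j ≤ S j)
    (hC : ∀ j, C j = S j + x j)
    (hseq : ∀ j : Fin n, ∀ h : (j : ℕ) + 1 < n, C j ≤ S ⟨(j : ℕ) + 1, h⟩)
    (j : Fin n) :
    ∃ m : Fin n, j ≤ m ∧
      insert j {j' | Relation.TransGen (fun a b => C a ≤ C b ∧ r b < C a) j j'}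
        = Set.Icc j m := by
  classical
  set R : Fin n → Fin n → Prop := fun a b => C a ≤ C b ∧ r b < C a with hRdef
  have hSC : ∀ a : Fin n, S a < C a := by
    intro a; rw [hC]; linarith [hx a]
  have key : ∀ d : ℕ, ∀ a b : Fin n, (b : ℕ) = (a : ℕ) + d → C a ≤ C b := by
    intro d
    induction d with
    | zero =>
      intro a b h
      have : a = b := Fin.ext (by omega)
      subst this; exact le_refl _
    | succ d ih =>
      intro a b h
      have hb : (b : ℕ) < n := b.isLt
      have hlt : (a : ℕ) + d < n := by omega
      have h1 : C a ≤ C ⟨(a : ℕ) + d, hlt⟩ := ih a ⟨(a : ℕ) + d, hlt⟩ rfl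
      have h2 : C (⟨(a : ℕ) + d, hlt⟩ : Fin n) ≤ S b := by
        have hb' : ((⟨(a : ℕ) + d, hlt⟩ : Fin n) : ℕ) + 1 < n := by simp; omega
        have hbe : b = ⟨((⟨(a : ℕ) + d, hlt⟩ : Fin n) : ℕ) + 1, hb'⟩ := Fin.ext (by simp; omega)
        rw [hbe]; exact hseq _ hb'
      exact h1.trans (h2.trans (hSC b).le)
  have hCm : ∀ a b : Fin n, a ≤ b → C a ≤ C b := by
    intro a b hab
    exact key ((b : ℕ) - (a : ℕ)) a b (by omega)
  have hCs : ∀ a b : Fin n, a < b → C a < C b := by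
    intro a b hab
    have h1 : (a : ℕ) + 1 < n := by
      have := b.isLt
      have : (a : ℕ) < (b : ℕ) := hab
      omega
    have h2 : C a ≤ S ⟨(a : ℕ) + 1, h1⟩ := hseq a h1
    have h3 : C (⟨(a : ℕ) + 1, h1⟩ : Fin n) ≤ C b := by
      apply hCm
      show ((a : ℕ) + 1) ≤ (b : ℕ)
      exact hab
    exact lt_of_le_of_lt h2 (lt_of_lt_of_le (hSC _) h3)
  have hle_of_R : ∀ a b : Fin n, Relation.TransGen R j a → a ∈ ({b | Relation.TransGen R j b}) → True := fun _ _ _ _ => trivial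
  have hRle : ∀ a b : Fin n, R a b → a ≤ b := by
    intro a b hab
    by_contra h
    push_neg at h
    exact absurd hab.1 (not_le.mpr (hCs b a h))
  have hTle : ∀ b : Fin n, Relation.TransGen R j b → j ≤ b := by
    intro b hb
    induction hb with
    | single h => exact hRle _ _ h
    | tail _ h ih => exact ih.trans (hRle _ _ h)
  have hRrefl : ∀ a : Fin n, R a a :=
    fun a => ⟨le_refl _, lt_of_le_of_lt (hrS a) (hSC a)⟩
  have down : ∀ b : Fin n, Relation.TransGen R j b →
      ∀ k : Fin n, j ≤ k → k ≤ b → Relation.TransGen R j k := by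
    intro b hb
    induction hb with
    | single h =>
      intro k hjk hkb
      exact Relation.TransGen.single ⟨hCm j k hjk, lt_of_le_of_lt (hr hkb) h.2⟩
    | @tail a b' hja hab ih =>
      intro k hjk hkb
      by_cases hk : k ≤ a
      · exact ih k hjk hk
      · push_neg at hk
        exact Relation.TransGen.tail hja ⟨hCm a k hk.le, lt_of_le_of_lt (hr hkb) hab.2⟩
  have hjmem : Relation.TransGen R j j := Relation.TransGen.single (hRrefl j)
  set T : Finset (Fin n) := Finset.univ.filter (fun b => Relation.TransGen R j b) with hT
  have hjT : j ∈ T := by simp [hT, hjmem]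
  have hTne : T.Nonempty := ⟨j, hjT⟩
  refine ⟨T.max' hTne, Finset.le_max' T j hjT, ?_⟩
  have hmmem : Relation.TransGen R j (T.max' hTne) := by
    have := T.max'_mem hTne
    simpa [hT] using this
  ext k
  simp only [Set.mem_insert_iff, Set.mem_setOf_eq, Set.mem_Icc]
  constructor
  · rintro (rfl | hk)
    · exact ⟨le_refl _, Finset.le_max' T k hjT⟩
    · refine ⟨hTle k hk, Finset.le_max' T k ?_⟩
      simp [hT, hk]
  · rintro ⟨h1, h2⟩
    exact Or.inr (down _ hmmem k h1 h2)
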